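/- arXiv:2001.04372 — 5 statements merged into one kernel-verified Lean document; each statement's English description precedes it below -/
import Mathlib

section
/- In a normed vector space V, if d is a point and D is a set of points containing d, then the Voronoi cell V_d = {x ∈ V : ∀ d' ∈ D, ‖x - d‖ ≤ ‖x - d'‖} is star-shaped with respect to d, i.e., for every x ∈ V_d and s ∈ [0,1], the point d + s(x - d) belongs to V_d. -/
theorem voronoi_cell_starshaped
    {V : Type*} [NormedAddCommGroup V] [NormedSpace ℝ V]
    (D : Set V) (d : V) (hd : d ∈ D)
    (x : V) (hx : x ∈ {y : V | ∀ d' ∈ D, ‖y - d‖ ≤ ‖y - d'‖})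
    (s : ℝ) (hs : s ∈ Set.Icc (0 : ℝ) 1) :
    d + s • (x - d) ∈ {y : V | ∀ d' ∈ D, ‖y - d‖ ≤ ‖y - d'‖} := by
  intro d' hd'
  obtain ⟨hs0, hs1⟩ := hs
  set y := d + s • (x - d) with hy
  have h1 : ‖y - d‖ = s * ‖x - d‖ := by
    simp [hy, norm_smul, abs_of_nonneg hs0]
  have h2 : x - y = (1 - s) • (x - d) := by
    simp [hy]; module
  have h3 : ‖x - y‖ = (1 - s) * ‖x - d‖ := by
    rw [h2, norm_smul, Real.norm_eq_abs, abs_of_nonneg (by linarith)]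
  have h4 : ‖x - d'‖ ≤ ‖x - y‖ + ‖y - d'‖ := by
    calc ‖x - d'‖ = ‖(x - y) + (y - d')‖ := by abel_nf
    _ ≤ ‖x - y‖ + ‖y - d'‖ := norm_add_le _ _
  have hxd := hx d' hd'
  have hxd2 := hx d hd
  nlinarith
end

section
/- Let X be a separable Banach space and 0 < δ < 1. Then there exists a sequence (v_j, v_j*) in X × X* such that: (a) ‖v_j‖ = ‖v_j*‖ = v_j*(v_j) = 1 for all j; (b) |v_j*(v_k)| ≤ δ whenever j < k; (c) sup_j |v_j*(v)| ≥ δ‖v‖ for all v ∈ X. -/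
open Classical in
/-- Auxiliary recursive construction: at step `k`, if all previously chosen functionals are
at most `δ` on `y k`, take `y k`; otherwise take a unit vector killed by all previous
functionals. In either case pair with a norming functional. -/
noncomputable def buildSeq {X : Type*} [NormedAddCommGroup X] [NormedSpace ℝ X]
    (δ : ℝ) (y : ℕ → X) (dual : X → (X →L[ℝ] ℝ))
    (zero : (ℕ → (X →L[ℝ] ℝ)) → ℕ → X) : ℕ → X × (X →L[ℝ] ℝ)
  | k =>
    let prev : ℕ → (X →L[ℝ] ℝ) := fun j => if h : j < k then (buildSeq δ y dual zero j).2 else 0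
    let v : X := if ∀ j, j < k → |prev j (y k)| ≤ δ then y k else zero prev k
    (v, dual v)
  termination_by k => k
  decreasing_by all_goals assumption

/-- In an infinite-dimensional space, finitely many functionals have a common unit kernel
vector. -/
lemma exists_unit_vanishing {X : Type*} [NormedAddCommGroup X] [NormedSpace ℝ X]
    (hinf : ¬ FiniteDimensional ℝ X) (f : ℕ → (X →L[ℝ] ℝ)) (k : ℕ) :
    ∃ v : X, ‖v‖ = 1 ∧ ∀ j < k, f j v = 0 := by
  by_contra h
  push_neg at h
  apply hinf
  let L : X →ₗ[ℝ] (Fin k → ℝ) := LinearMap.pi (fun j : Fin k => (f j).toLinearMap)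
  apply FiniteDimensional.of_injective L
  intro a b hab
  by_contra hne
  have hx0 : a - b ≠ 0 := sub_ne_zero_of_ne hne
  have hLx : ∀ j : Fin k, f j (a - b) = 0 := by
    intro j
    have h0 : L (a - b) = 0 := by rw [map_sub, hab, sub_self]
    have := congrFun h0 j
    simpa [L, LinearMap.pi_apply] using this
  have hnorm : ‖‖a - b‖⁻¹ • (a - b)‖ = 1 := by
    rw [norm_smul, norm_inv, norm_norm]
    exact inv_mul_cancel₀ (norm_ne_zero_iff.mpr hx0)
  obtain ⟨j, hj, hne'⟩ := h _ hnorm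
  apply hne'
  rw [map_smul]
  have := hLx ⟨j, hj⟩
  simp only [smul_eq_mul]
  simp [this]

theorem exists_biorthogonal_like_system
    {X : Type*} [NormedAddCommGroup X] [NormedSpace ℝ X]
    [CompleteSpace X] [TopologicalSpace.SeparableSpace X]
    (hinf : ¬ FiniteDimensional ℝ X)
    (δ : ℝ) (hδ : 0 < δ) (hδ1 : δ < 1) :
    ∃ (v : ℕ → X) (vstar : ℕ → X →L[ℝ] ℝ),
      (∀ j, ‖v j‖ = 1 ∧ ‖vstar j‖ = 1 ∧ vstar j (v j) = 1) ∧
      (∀ j k, j < k → |vstar j (v k)| ≤ δ) ∧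
      (∀ x : X, δ * ‖x‖ ≤ ⨆ j, |vstar j x|) := by
  classical
  -- X is nontrivial
  have hnt : Nontrivial X := by
    by_contra h
    rw [not_nontrivial_iff_subsingleton] at h
    exact hinf (Module.finite_of_rank_eq_zero (by simp [rank_subsingleton']))
  -- dense sequence in the unit sphere
  have hsne : Nonempty (Metric.sphere (0:X) 1) := by
    obtain ⟨x, hx⟩ := exists_ne (0:X)
    refine ⟨⟨‖x‖⁻¹ • x, ?_⟩⟩
    rw [mem_sphere_zero_iff_norm, norm_smul, norm_inv, norm_norm]
    field_simp [norm_ne_zero_iff.mpr hx]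
  haveI : SecondCountableTopology X := UniformSpace.secondCountable_of_separable X
  obtain ⟨u, hu⟩ := TopologicalSpace.exists_dense_seq (Metric.sphere (0:X) 1)
  set y : ℕ → X := fun k => (u k : X) with hy
  have hy1 : ∀ k, ‖y k‖ = 1 := fun k => mem_sphere_zero_iff_norm.mp (u k).2
  have hy2 : ∀ x : X, ‖x‖ = 1 → ∀ ε > 0, ∃ k, ‖y k - x‖ < ε := by
    intro x hx ε hε
    obtain ⟨k, hk⟩ := Metric.denseRange_iff.mp hu ⟨x, mem_sphere_zero_iff_norm.mpr hx⟩ ε hε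
    refine ⟨k, ?_⟩
    rw [Subtype.dist_eq, dist_eq_norm] at hk
    rw [norm_sub_rev]
    exact hk
  -- norming functionals
  have hd : ∀ w : X, ∃ g : X →L[ℝ] ℝ, ‖w‖ = 1 → (‖g‖ = 1 ∧ g w = 1) := by
    intro w
    by_cases hw : ‖w‖ = 1
    · obtain ⟨g, hg1, hg2⟩ := exists_dual_vector ℝ w (by
        intro h0; rw [h0] at hw; norm_num at hw)
      exact ⟨g, fun _ => ⟨hg1, by rw [hg2, hw]; norm_num⟩⟩
    · exact ⟨0, fun h => absurd h hw⟩
  choose dual hdual using hd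
  -- unit vectors in kernels
  have hz := fun f k => exists_unit_vanishing hinf f k
  choose zero hz1 hz2 using hz
  -- the sequence
  set B : ℕ → X × (X →L[ℝ] ℝ) := buildSeq δ y dual zero with hB
  have hstep : ∀ k, B k =
      (let prev : ℕ → (X →L[ℝ] ℝ) := fun j => if h : j < k then (B j).2 else 0
       let v : X := if ∀ j, j < k → |prev j (y k)| ≤ δ then y k else zero prev k
       (v, dual v)) := by
    intro k
    rw [hB]
    conv_lhs => rw [buildSeq]
  have hsnd : ∀ k, (B k).2 = dual ((B k).1) := by
    intro k
    rw [hstep k]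
  -- main case analysis
  have hkey : ∀ k,
      ((∀ j, j < k → |(B j).2 (y k)| ≤ δ) → (B k).1 = y k) ∧
      (¬ (∀ j, j < k → |(B j).2 (y k)| ≤ δ) →
        ‖(B k).1‖ = 1 ∧ ∀ j, j < k → (B j).2 ((B k).1) = 0) := by
    intro k
    have hfst : (B k).1 =
        if ∀ j, j < k → |(if h : j < k then (B j).2 else 0) (y k)| ≤ δ then y k
        else zero (fun j => if h : j < k then (B j).2 else 0) k := by
      conv_lhs => rw [hstep k]
    have hcond : (∀ j, j < k → |(if h : j < k then (B j).2 else 0) (y k)| ≤ δ) ↔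
        (∀ j, j < k → |(B j).2 (y k)| ≤ δ) := by
      constructor <;> intro h j hj <;> have h' := h j hj <;> simpa [hj] using h'
    constructor
    · intro h
      rw [hfst, if_pos (hcond.mpr h)]
    · intro h
      rw [hfst, if_neg (fun hc => h (hcond.mp hc))]
      refine ⟨hz1 _ _, fun j hj => ?_⟩
      have := hz2 (fun j => if h : j < k then (B j).2 else 0) k j hj
      simpa [hj] using this
  have hunit : ∀ k, ‖(B k).1‖ = 1 := by
    intro k
    by_cases h : ∀ j, j < k → |(B j).2 (y k)| ≤ δ
    · rw [(hkey k).1 h]; exact hy1 k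
    · exact ((hkey k).2 h).1
  have ha : ∀ k, ‖(B k).1‖ = 1 ∧ ‖(B k).2‖ = 1 ∧ (B k).2 ((B k).1) = 1 := by
    intro k
    refine ⟨hunit k, ?_, ?_⟩
    · rw [hsnd k]; exact (hdual _ (hunit k)).1
    · rw [hsnd k]; exact (hdual _ (hunit k)).2
  have hb : ∀ j k, j < k → |(B j).2 ((B k).1)| ≤ δ := by
    intro j k hjk
    by_cases h : ∀ j, j < k → |(B j).2 (y k)| ≤ δ
    · rw [(hkey k).1 h]; exact h j hjk
    · rw [((hkey k).2 h).2 j hjk]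
      simpa using hδ.le
  refine ⟨fun k => (B k).1, fun k => (B k).2, ha, hb, ?_⟩
  intro x
  have hbdd : BddAbove (Set.range fun j => |(B j).2 x|) := by
    refine ⟨‖x‖, ?_⟩
    rintro _ ⟨j, rfl⟩
    calc |(B j).2 x| ≤ ‖(B j).2‖ * ‖x‖ := (B j).2.le_opNorm x
    _ = ‖x‖ := by rw [(ha j).2.1, one_mul]
  rcases eq_or_ne x 0 with rfl | hx0
  · simp only [norm_zero, mul_zero]
    have h0 : |(B 0).2 (0:X)| = 0 := by simp
    calc (0:ℝ) = |(B 0).2 (0:X)| := h0.symm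
    _ ≤ ⨆ j, |(B j).2 (0:X)| := le_ciSup hbdd 0
  · by_contra hcon
    push_neg at hcon
    set S := ⨆ j, |(B j).2 x| with hS
    have hxpos : 0 < ‖x‖ := norm_pos_iff.mpr hx0
    set xh := ‖x‖⁻¹ • x with hxh
    have hxh1 : ‖xh‖ = 1 := by
      rw [hxh, norm_smul, norm_inv, norm_norm]
      field_simp
    have hjx : ∀ j, |(B j).2 xh| ≤ S / ‖x‖ := by
      intro j
      have h1 : |(B j).2 x| ≤ S := le_ciSup hbdd j
      have h2 : |(B j).2 xh| = |(B j).2 x| / ‖x‖ := by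
        rw [hxh, map_smul, smul_eq_mul, abs_mul, abs_inv, abs_norm, div_eq_inv_mul]
      rw [h2]
      exact div_le_div_of_nonneg_right h1 hxpos.le
    have hSd : S / ‖x‖ < δ := (div_lt_iff₀ hxpos).mpr (by linarith)
    set ε := min (δ - S / ‖x‖) (1 - δ) with hε
    have hεpos : 0 < ε := lt_min (by linarith) (by linarith)
    obtain ⟨k, hk⟩ := hy2 xh hxh1 ε hεpos
    have hQk : ∀ j, j < k → |(B j).2 (y k)| ≤ δ := by
      intro j hj
      have h2 : |(B j).2 (y k - xh)| ≤ ‖y k - xh‖ := by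
        calc |(B j).2 (y k - xh)| ≤ ‖(B j).2‖ * ‖y k - xh‖ := (B j).2.le_opNorm _
        _ = ‖y k - xh‖ := by rw [(ha j).2.1, one_mul]
      have h3 : (B j).2 (y k) = (B j).2 xh + (B j).2 (y k - xh) := by
        rw [map_sub]; ring
      have h4 : |(B j).2 (y k)| ≤ |(B j).2 xh| + |(B j).2 (y k - xh)| := by
        rw [h3]; exact abs_add_le _ _
      have h5 := hjx j
      have h6 : ε ≤ δ - S / ‖x‖ := min_le_left _ _
      linarith
    have hvk : (B k).1 = y k := (hkey k).1 hQk
    have hk1 : (B k).2 (y k) = 1 := by rw [← hvk]; exact (ha k).2.2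
    have h7 : |(B k).2 (y k - xh)| ≤ ‖y k - xh‖ := by
      calc |(B k).2 (y k - xh)| ≤ ‖(B k).2‖ * ‖y k - xh‖ := (B k).2.le_opNorm _
      _ = ‖y k - xh‖ := by rw [(ha k).2.1, one_mul]
    have h8 : (B k).2 xh = (B k).2 (y k) - (B k).2 (y k - xh) := by
      rw [map_sub]; ring
    have h9 : 1 - ε ≤ |(B k).2 xh| := by
      rw [h8, hk1]
      have habs := abs_sub_abs_le_abs_sub (1:ℝ) ((B k).2 (y k - xh))
      rw [abs_one] at habs
      linarith
    have h10 := hjx k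
    have h11 : ε ≤ 1 - δ := min_le_right _ _
    linarith
end

section
/- Let X be a normed space, δ, η ∈ (0,1), η_δ = min{η, 1-δ}, and let C be a convex set with B(0, η_δ) ⊆ C. For x ∈ C with ‖x‖ ≥ √(1-δ), set x₀ = (√(1-δ)/‖x‖)·x, y₀ = ((η_δ + (1-δ))/(η_δ + √(1-δ)))·x₀, and r = η_δ·(√(1-δ) - (1-δ))/(η_δ + √(1-δ)). Then r > 0, ‖y₀‖ - r = 1 - δ (so the closed ball B(y₀, r) is disjoint from the open ball of radius 1-δ around 0), and B(y₀, r) ⊆ C. -/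
theorem ball_in_slice_construction
    {X : Type*} [NormedAddCommGroup X] [NormedSpace ℝ X]
    (δ η : ℝ) (hδ : δ ∈ Set.Ioo (0 : ℝ) 1) (hη : η ∈ Set.Ioo (0 : ℝ) 1)
    (C : Set X) (hC : Convex ℝ C)
    (hball : Metric.closedBall (0 : X) (min η (1 - δ)) ⊆ C)
    (x : X) (hx : x ∈ C) (hxnorm : Real.sqrt (1 - δ) ≤ ‖x‖) :
    0 < min η (1 - δ) * (Real.sqrt (1 - δ) - (1 - δ)) / (min η (1 - δ) + Real.sqrt (1 - δ)) ∧
    ‖((min η (1 - δ) + (1 - δ)) / (min η (1 - δ) + Real.sqrt (1 - δ))) •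
        ((Real.sqrt (1 - δ) / ‖x‖) • x)‖ -
      min η (1 - δ) * (Real.sqrt (1 - δ) - (1 - δ)) / (min η (1 - δ) + Real.sqrt (1 - δ))
      = 1 - δ ∧
    Metric.closedBall
      (((min η (1 - δ) + (1 - δ)) / (min η (1 - δ) + Real.sqrt (1 - δ))) •
        ((Real.sqrt (1 - δ) / ‖x‖) • x))
      (min η (1 - δ) * (Real.sqrt (1 - δ) - (1 - δ)) / (min η (1 - δ) + Real.sqrt (1 - δ)))
      ⊆ C := by
  obtain ⟨hδ0, hδ1⟩ := hδ
  obtain ⟨hη0, hη1⟩ := hη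
  set m : ℝ := min η (1 - δ) with hm
  set s : ℝ := Real.sqrt (1 - δ) with hs
  have h1δ : (0:ℝ) < 1 - δ := by linarith
  have hs0 : 0 < s := Real.sqrt_pos.mpr h1δ
  have hssq : s ^ 2 = 1 - δ := Real.sq_sqrt h1δ.le
  have hs1 : s < 1 := by nlinarith
  have hδs : 1 - δ < s := by nlinarith
  have hm0 : 0 < m := lt_min hη0 h1δ
  have hms : m ≤ 1 - δ := min_le_right _ _
  have hms0 : 0 < m + s := by linarith
  have hr0 : 0 < m * (s - (1 - δ)) / (m + s) :=
    div_pos (mul_pos hm0 (by linarith)) hms0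
  have hxn0 : 0 < ‖x‖ := lt_of_lt_of_le hs0 hxnorm
  -- norm of x₀
  have hx0norm : ‖(s / ‖x‖) • x‖ = s := by
    rw [norm_smul, Real.norm_eq_abs, abs_of_pos (div_pos hs0 hxn0)]
    field_simp
  have ht0 : 0 ≤ (m + (1 - δ)) / (m + s) := by positivity
  have hy0norm : ‖((m + (1 - δ)) / (m + s)) • ((s / ‖x‖) • x)‖
      = (m + (1 - δ)) / (m + s) * s := by
    rw [norm_smul, Real.norm_eq_abs, abs_of_nonneg ht0, hx0norm]
  refine ⟨hr0, ?_, ?_⟩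
  · rw [hy0norm]
    field_simp
    ring
  · -- x₀ ∈ C
    have h0C : (0 : X) ∈ C := hball (by simp [hm0.le])
    have hx0C : (s / ‖x‖) • x ∈ C := by
      have := hC h0C hx (a := 1 - s / ‖x‖) (b := s / ‖x‖)
        (by rw [sub_nonneg]; exact div_le_one_of_le₀ hxnorm hxn0.le)
        (by positivity) (by ring)
      simpa using this
    intro z hz
    rw [Metric.mem_closedBall, dist_eq_norm] at hz
    set θ : ℝ := (s - (1 - δ)) / (m + s) with hθ
    have hθ0 : 0 < θ := div_pos (by linarith) hms0
    set y₀ : X := ((m + (1 - δ)) / (m + s)) • ((s / ‖x‖) • x) with hy₀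
    have huC : (θ⁻¹) • (z - y₀) ∈ C := by
      apply hball
      rw [Metric.mem_closedBall, dist_zero_right, norm_smul, Real.norm_eq_abs,
        abs_of_pos (inv_pos.mpr hθ0)]
      rw [inv_mul_le_iff₀ hθ0]
      calc ‖z - y₀‖ ≤ m * (s - (1 - δ)) / (m + s) := hz
        _ = θ * m := by rw [hθ]; field_simp
    have key := hC hx0C huC (a := (m + (1 - δ)) / (m + s)) (b := θ) ht0 hθ0.le
      (by rw [hθ]; field_simp; ring)
    have : ((m + (1 - δ)) / (m + s)) • ((s / ‖x‖) • x) + θ • (θ⁻¹ • (z - y₀)) = z := by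
      rw [smul_inv_smul₀ hθ0.ne', hy₀]; abel
    rwa [this] at key
end

section
/- Let h : F → G be a uniform homeomorphism between subsets F ⊆ X, G ⊆ Y of Banach spaces. If F admits a tiling {C_α} (closed sets with nonempty relative interior covering F, with pairwise intersections of empty relative interior) such that for some R > r > 0 and points c_α, B(c_α, r) ∩ F ⊆ C_α ⊆ B(c_α, R) ∩ F, then G admits a tiling {h(C_α)} with points h(c_α) and some radii ρ > 0 and ω(R) such that B(h(c_α), ρ) ∩ G ⊆ h(C_α) ⊆ B(h(c_α), ω(R)) ∩ G, where ω is a common modulus of continuity of h and h⁻¹. -/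
theorem uniform_homeomorphism_preserves_normal_tilings
    {X Y : Type*} [NormedAddCommGroup X] [NormedSpace ℝ X] [CompleteSpace X]
    [NormedAddCommGroup Y] [NormedSpace ℝ Y] [CompleteSpace Y]
    (F : Set X) (G : Set Y) (h : X → Y) (hinv : Y → X)
    (hmapsto : ∀ x ∈ F, h x ∈ G) (hinvmapsto : ∀ y ∈ G, hinv y ∈ F)
    (hleft : ∀ x ∈ F, hinv (h x) = x) (hright : ∀ y ∈ G, h (hinv y) = y)
    (ω : ℝ → ℝ)
    (hω0 : Filter.Tendsto ω (nhdsWithin 0 (Set.Ioi 0)) (nhds 0))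
    (hmodh : ∀ δ > (0 : ℝ), ∀ x ∈ F, ∀ x' ∈ F, ‖x - x'‖ ≤ δ → ‖h x - h x'‖ ≤ ω δ)
    (hmodinv : ∀ δ > (0 : ℝ), ∀ y ∈ G, ∀ y' ∈ G, ‖y - y'‖ ≤ δ → ‖hinv y - hinv y'‖ ≤ ω δ)
    {ι : Type*} (C : ι → Set X) (c : ι → X) (r R : ℝ) (hrR : 0 < r) (hRr : r < R)
    (hclosed : ∀ α, IsClosed (C α)) (hsub : ∀ α, C α ⊆ F) (hc : ∀ α, c α ∈ F)
    (hcover : F ⊆ ⋃ α, C α)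
    (hdisj : ∀ α β, α ≠ β → ∀ U : Set X, IsOpen U → U ∩ F ⊆ C α ∩ C β → U ∩ F = ∅)
    (hinner : ∀ α, Metric.closedBall (c α) r ∩ F ⊆ C α)
    (houter : ∀ α, C α ⊆ Metric.closedBall (c α) R ∩ F) :
    ∃ ρ : ℝ, 0 < ρ ∧
      (G ⊆ ⋃ α, h '' (C α)) ∧
      (∀ α β, α ≠ β → ∀ V : Set Y, IsOpen V →
        V ∩ G ⊆ (h '' (C α)) ∩ (h '' (C β)) → V ∩ G = ∅) ∧
      (∀ α, Metric.closedBall (h (c α)) ρ ∩ G ⊆ h '' (C α)) ∧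
      (∀ α, h '' (C α) ⊆ Metric.closedBall (h (c α)) (ω R) ∩ G) := by
  have hRpos : (0:ℝ) < R := hrR.trans hRr
  have hev : ∀ᶠ δ in nhdsWithin 0 (Set.Ioi 0), ω δ < r :=
    hω0.eventually_lt_const hrR
  obtain ⟨δ, hδr, hδpos⟩ := (hev.and eventually_mem_nhdsWithin).exists
  refine ⟨δ, hδpos, ?_, ?_, ?_, ?_⟩
  · intro y hy
    obtain ⟨α, hα⟩ := Set.mem_iUnion.mp (hcover (hinvmapsto y hy))
    exact Set.mem_iUnion.mpr ⟨α, hinv y, hα, hright y hy⟩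
  · intro α β hne V hV hVsub
    by_contra hne'
    obtain ⟨y, hyV, hyG⟩ := Set.nonempty_iff_ne_empty.mpr hne'
    set x := hinv y with hx
    have hxF : x ∈ F := hinvmapsto y hyG
    obtain ⟨ε, hεpos, hεsub⟩ := Metric.isOpen_iff.mp hV y hyV
    have hev2 : ∀ᶠ δ' in nhdsWithin 0 (Set.Ioi 0), ω δ' < ε :=
      hω0.eventually_lt_const hεpos
    obtain ⟨δ', hδ'ε, hδ'pos⟩ := (hev2.and eventually_mem_nhdsWithin).exists
    have key : Metric.ball x δ' ∩ F ⊆ C α ∩ C β := by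
      rintro x' ⟨hx'b, hx'F⟩
      have hd : ‖x' - x‖ ≤ δ' := by
        rw [← dist_eq_norm]; exact (Metric.mem_ball.mp hx'b).le
      have hω' : ‖h x' - h x‖ ≤ ω δ' := hmodh δ' hδ'pos x' hx'F x hxF hd
      have hhx : h x = y := hright y hyG
      have hmemV : h x' ∈ V := by
        apply hεsub
        rw [Metric.mem_ball, dist_eq_norm, ← hhx]
        exact lt_of_le_of_lt hω' hδ'ε
      obtain ⟨⟨a, haC, hae⟩, ⟨b, hbC, hbe⟩⟩ := hVsub ⟨hmemV, hmapsto x' hx'F⟩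
      have ha' : a = x' := by
        have h1 := hleft a (hsub α haC)
        have h2 := hleft x' hx'F
        rw [hae] at h1; rw [h1] at h2; exact h2.symm ▸ h2
      have hb' : b = x' := by
        have h1 := hleft b (hsub β hbC)
        have h2 := hleft x' hx'F
        rw [hbe] at h1; rw [h1] at h2; exact h2.symm ▸ h2
      exact ⟨ha' ▸ haC, hb' ▸ hbC⟩
    have hempty := hdisj α β hne (Metric.ball x δ') Metric.isOpen_ball key
    have : x ∈ Metric.ball x δ' ∩ F := ⟨Metric.mem_ball_self hδ'pos, hxF⟩
    rw [hempty] at this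
    exact this
  · rintro α y ⟨hyb, hyG⟩
    have hxF := hinvmapsto y hyG
    have hcG : h (c α) ∈ G := hmapsto _ (hc α)
    have hd : ‖y - h (c α)‖ ≤ δ := by
      rw [← dist_eq_norm]; exact Metric.mem_closedBall.mp hyb
    have h1 : ‖hinv y - hinv (h (c α))‖ ≤ ω δ := hmodinv δ hδpos y hyG _ hcG hd
    rw [hleft _ (hc α)] at h1
    have hmem : hinv y ∈ C α := by
      apply hinner α
      refine ⟨?_, hxF⟩
      rw [Metric.mem_closedBall, dist_eq_norm]
      exact h1.trans hδr.le
    exact ⟨hinv y, hmem, hright y hyG⟩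
  · rintro α y ⟨x, hxC, rfl⟩
    obtain ⟨hxb, hxF⟩ := houter α hxC
    refine ⟨?_, hmapsto x hxF⟩
    rw [Metric.mem_closedBall, dist_eq_norm]
    exact hmodh R hRpos x hxF _ (hc α) (by rw [← dist_eq_norm]; exact Metric.mem_closedBall.mp hxb)
end

section
/- The Mazur map M : L²(μ) → L¹(μ), M(f)(x) = sign(f(x))·|f(x)|², is Lipschitz with constant 2 on the closed unit ball of L²(μ): for all f, g with ‖f‖₂ ≤ 1 and ‖g‖₂ ≤ 1, ‖M(f) - M(g)‖₁ ≤ 2‖f - g‖₂. -/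
open MeasureTheory

lemma mazur_pointwise (a b : ℝ) :
    |Real.sign a * |a| ^ 2 - Real.sign b * |b| ^ 2| ≤ |a - b| * (|a| + |b|) := by
  have ha : Real.sign a * |a| ^ 2 = a * |a| := by
    rcases lt_trichotomy a 0 with h | h | h
    · rw [Real.sign_of_neg h, abs_of_neg h]; ring
    · simp [h]
    · rw [Real.sign_of_pos h, abs_of_pos h]; ring
  have hb : Real.sign b * |b| ^ 2 = b * |b| := by
    rcases lt_trichotomy b 0 with h | h | h
    · rw [Real.sign_of_neg h, abs_of_neg h]; ring
    · simp [h]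
    · rw [Real.sign_of_pos h, abs_of_pos h]; ring
  rw [ha, hb]
  have key : a * |a| - b * |b| = (a - b) * |a| + b * (|a| - |b|) := by ring
  calc abs (a * |a| - b * |b|) ≤ abs ((a - b) * |a|) + abs (b * (|a| - |b|)) := by
        rw [key]; exact abs_add_le _ _
    _ ≤ |a - b| * |a| + |b| * |a - b| := by
        rw [abs_mul, abs_mul, abs_abs]
        exact add_le_add le_rfl
          (mul_le_mul_of_nonneg_left (abs_abs_sub_abs_le_abs_sub a b) (abs_nonneg b))
    _ = |a - b| * (|a| + |b|) := by ring

theorem mazur_map_lipschitz_on_unit_ball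
    {α : Type*} [MeasurableSpace α] (μ : Measure α)
    (f g : α → ℝ) (hf : Measurable f) (hg : Measurable g)
    (hf2 : eLpNorm f 2 μ ≤ 1) (hg2 : eLpNorm g 2 μ ≤ 1) :
    eLpNorm (fun x => Real.sign (f x) * |f x| ^ 2 - Real.sign (g x) * |g x| ^ 2) 1 μ
      ≤ 2 * eLpNorm (fun x => f x - g x) 2 μ := by
  set F : α → ℝ := fun x => f x - g x with hF
  set G : α → ℝ := fun x => |f x| + |g x| with hG
  have hFm : AEStronglyMeasurable F μ := (hf.sub hg).aestronglyMeasurable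
  have hGm : AEStronglyMeasurable G μ := (hf.abs.add hg.abs).aestronglyMeasurable
  have h1 : eLpNorm (fun x => Real.sign (f x) * |f x| ^ 2 - Real.sign (g x) * |g x| ^ 2) 1 μ
      ≤ eLpNorm (fun x => F x * G x) 1 μ := by
    apply eLpNorm_mono
    intro x
    simp only [Real.norm_eq_abs, hF, hG]
    rw [abs_mul, abs_of_nonneg (add_nonneg (abs_nonneg (f x)) (abs_nonneg (g x)))]
    exact mazur_pointwise _ _
  have h2 : eLpNorm (fun x => F x * G x) 1 μ ≤ eLpNorm F 2 μ * eLpNorm G 2 μ := by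
    refine (eLpNorm_le_eLpNorm_mul_eLpNorm'_of_norm (p := 2) (q := 2) (r := 1) hFm hGm (· * ·) 1 ?_).trans_eq (by simp)
    · filter_upwards with x
      simp [Real.norm_eq_abs, abs_mul]
  have h3 : eLpNorm G 2 μ ≤ 2 := by
    have : eLpNorm G 2 μ ≤ eLpNorm (fun x => |f x|) 2 μ + eLpNorm (fun x => |g x|) 2 μ :=
      eLpNorm_add_le hf.abs.aestronglyMeasurable hg.abs.aestronglyMeasurable one_le_two
    simp only [← Real.norm_eq_abs] at this
    rw [eLpNorm_norm, eLpNorm_norm] at this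
    calc eLpNorm G 2 μ ≤ eLpNorm f 2 μ + eLpNorm g 2 μ := this
      _ ≤ 1 + 1 := add_le_add hf2 hg2
      _ = 2 := one_add_one_eq_two
  calc eLpNorm (fun x => Real.sign (f x) * |f x| ^ 2 - Real.sign (g x) * |g x| ^ 2) 1 μ
      ≤ eLpNorm F 2 μ * eLpNorm G 2 μ := h1.trans h2
    _ ≤ eLpNorm F 2 μ * 2 := by gcongr
    _ = 2 * eLpNorm F 2 μ := mul_comm _ _
end
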